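/- Let E₁ and E₀ be separable real Hilbert spaces and ι : E₁ → E₀ an injective continuous linear map with dense range. Define the extended E₁-norm N : E₀ → [0,∞] by N(x) = ‖y‖_{E₁} if x = ι(y) for the (unique) y ∈ E₁, and N(x) = ∞ if x does not lie in the range of ι. Then N is lower semicontinuous with respect to the norm topology of E₀; in particular, N is Borel measurable on E₀. -/

import Mathlib

open scoped ENNReal RealInnerProductSpace

set_option maxHeartbeats 800000 in
/-- Let `E₁`, `E₀` be separable real Hilbert spaces and `ι : E₁ → E₀`
an injective continuous linear map with dense range. The extended `E₁`-norm
`N : E₀ → [0,∞]` (equal to `‖y‖` if `x = ι y` and `∞` off the range of `ι`) is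
lower semicontinuous on `E₀`, and in particular Borel measurable. -/
theorem stmt_0
    {E₁ E₀ : Type*}
    [NormedAddCommGroup E₁] [InnerProductSpace ℝ E₁] [CompleteSpace E₁]
    [TopologicalSpace.SeparableSpace E₁]
    [NormedAddCommGroup E₀] [InnerProductSpace ℝ E₀] [CompleteSpace E₀]
    [TopologicalSpace.SeparableSpace E₀]
    [MeasurableSpace E₀] [BorelSpace E₀]
    (ι : E₁ →L[ℝ] E₀) (hι : Function.Injective ι) (hdense : DenseRange ι)
    (N : E₀ → ℝ≥0∞)
    (hN₁ : ∀ y : E₁, N (ι y) = (‖y‖₊ : ℝ≥0∞))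
    (hN₂ : ∀ x : E₀, x ∉ Set.range ι → N x = ∞) :
    LowerSemicontinuous N ∧ Measurable N := by
  classical
  set A : E₀ →L[ℝ] E₁ := ContinuousLinearMap.adjoint ι with hA
  have hadj : ∀ (w : E₀) (z : E₁), ⟪A w, z⟫ = ⟪w, ι z⟫ := fun w z =>
    ContinuousLinearMap.adjoint_inner_left ι z w
  have hadj' : ∀ (y : E₁) (w : E₀), ⟪ι y, w⟫ = ⟪y, A w⟫ := by
    intro y w
    have h1 : ⟪ι y, w⟫ = ⟪w, ι y⟫ := real_inner_comm _ _
    have h2 : ⟪y, A w⟫ = ⟪A w, y⟫ := real_inner_comm _ _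
    rw [h1, h2, hadj]
  -- A is injective
  have hAinj : ∀ w : E₀, A w = 0 → w = 0 := by
    intro w h0
    have hc : (fun v : E₀ => ⟪w, v⟫) = fun _ => (0 : ℝ) := by
      refine Continuous.ext_on hdense (continuous_const.inner continuous_id)
        continuous_const ?_
      rintro _ ⟨z, rfl⟩
      show ⟪w, ι z⟫ = 0
      rw [← hadj, h0, inner_zero_left]
    have h2 : ⟪w, w⟫ = 0 := congrFun hc w
    rwa [inner_self_eq_zero] at h2
  set Alin : E₀ →ₗ[ℝ] E₁ := (A : E₀ →ₗ[ℝ] E₁) with hAlin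
  set p : Submodule ℝ E₁ := LinearMap.range Alin with hp
  -- A has dense range
  have hAdense : Dense ((p : Submodule ℝ E₁) : Set E₁) := by
    rw [Submodule.dense_iff_topologicalClosure_eq_top,
      Submodule.topologicalClosure_eq_top_iff, Submodule.eq_bot_iff]
    intro z hz
    have hz' : ∀ w : E₀, ⟪A w, z⟫ = 0 := fun w => hz (A w) ⟨w, rfl⟩
    have hz0 : ι z = 0 := by
      have h := hz' (ι z)
      rw [hadj] at h
      rwa [inner_self_eq_zero] at h
    exact hι (by rw [hz0, map_zero])
  -- The sup formula
  set G : E₀ → ℝ≥0∞ := fun x =>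
    ⨆ w : {w : E₀ // ‖A w‖ ≤ 1}, ENNReal.ofReal ⟪x, (w : E₀)⟫ with hG
  -- G is lower semicontinuous
  have hGlsc : LowerSemicontinuous G := by
    rw [hG]
    apply lowerSemicontinuous_iSup
    intro w
    exact (ENNReal.continuous_ofReal.comp
      (continuous_id.inner continuous_const)).lowerSemicontinuous
  -- G (ι y) = ‖y‖₊
  have hGrange : ∀ y : E₁, G (ι y) = (‖y‖₊ : ℝ≥0∞) := by
    intro y
    have hle : G (ι y) ≤ (‖y‖₊ : ℝ≥0∞) := by
      apply iSup_le
      rintro ⟨w, hw⟩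
      rw [← enorm_eq_nnnorm, ← ofReal_norm]
      apply ENNReal.ofReal_le_ofReal
      calc ⟪ι y, w⟫ = ⟪y, A w⟫ := hadj' y w
        _ ≤ ‖y‖ * ‖A w‖ := real_inner_le_norm y (A w)
        _ ≤ ‖y‖ * 1 := mul_le_mul_of_nonneg_left hw (norm_nonneg y)
        _ = ‖y‖ := mul_one _
    have hge : (‖y‖₊ : ℝ≥0∞) ≤ G (ι y) := by
      rcases eq_or_ne y 0 with rfl | hy0
      · simp
      have hny : (0 : ℝ) < ‖y‖ := norm_pos_iff.mpr hy0
      refine ENNReal.le_of_forall_pos_le_add ?_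
      intro ε hε _
      have hεR : (0 : ℝ) < (ε : ℝ) := hε
      obtain ⟨δ, hδpos, hδbound⟩ : ∃ δ : ℝ, 0 < δ ∧ 2 * δ * ‖y‖ ≤ (ε : ℝ) :=
        ⟨(ε : ℝ) / (2 * ‖y‖), div_pos hεR (by positivity),
          le_of_eq (by field_simp)⟩
      set u : E₁ := (‖y‖)⁻¹ • y with hu
      have hnu : ‖u‖ = 1 := by
        rw [hu, norm_smul, norm_inv, norm_norm, inv_mul_cancel₀ (ne_of_gt hny)]
      obtain ⟨z, hzmem, hzd⟩ := Metric.mem_closure_iff.mp (hAdense u) δ hδpos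
      obtain ⟨w, hwz⟩ := hzmem
      have hwz' : A w = z := hwz
      have h3 : ‖z - u‖ ≤ δ := by
        rw [dist_comm, dist_eq_norm] at hzd
        linarith
      have hin : ⟪y, z⟫ ≥ ‖y‖ - δ * ‖y‖ := by
        have h1 : ⟪y, u⟫ = ‖y‖ := by
          rw [hu, real_inner_smul_right, real_inner_self_eq_norm_mul_norm]
          field_simp
        have h2 : |⟪y, z - u⟫| ≤ ‖y‖ * ‖z - u‖ := abs_real_inner_le_norm y (z - u)
        have h4 : ⟪y, z⟫ = ⟪y, u⟫ + ⟪y, z - u⟫ := by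
          rw [← inner_add_right]
          congr 1
          abel
        have h5 : ⟪y, z - u⟫ ≥ -(δ * ‖y‖) := by
          have h6 := abs_le.mp h2
          nlinarith [mul_le_mul_of_nonneg_left h3 (norm_nonneg y)]
        rw [h4, h1]; linarith
      have hnz : ‖z‖ ≤ 1 + δ := by
        calc ‖z‖ = ‖u + (z - u)‖ := by congr 1; abel
          _ ≤ ‖u‖ + ‖z - u‖ := norm_add_le _ _
          _ ≤ 1 + δ := by rw [hnu]; linarith
      set w' : E₀ := (1 + δ)⁻¹ • w with hw'
      have hδ1 : (0:ℝ) < 1 + δ := by linarith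
      have hAw' : ‖A w'‖ ≤ 1 := by
        rw [hw', map_smul, norm_smul, norm_inv, Real.norm_eq_abs,
          abs_of_pos hδ1, hwz']
        have hh : (1 + δ)⁻¹ * ‖z‖ ≤ (1 + δ)⁻¹ * (1 + δ) :=
          mul_le_mul_of_nonneg_left hnz (inv_nonneg.mpr hδ1.le)
        rwa [inv_mul_cancel₀ (ne_of_gt hδ1)] at hh
      have hval : ‖y‖ - (ε : ℝ) ≤ ⟪ι y, w'⟫ := by
        rw [hadj', hw', map_smul, real_inner_smul_right, hwz']
        have hkey2 : (1 + δ) * (‖y‖ - (ε : ℝ)) ≤ ⟪y, z⟫ := by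
          nlinarith [hδpos, hεR, hin, hδbound]
        calc ‖y‖ - (ε : ℝ) = (1 + δ)⁻¹ * ((1 + δ) * (‖y‖ - (ε : ℝ))) :=
              (inv_mul_cancel_left₀ (ne_of_gt hδ1) _).symm
          _ ≤ (1 + δ)⁻¹ * ⟪y, z⟫ :=
              mul_le_mul_of_nonneg_left hkey2 (inv_nonneg.mpr hδ1.le)
      calc (‖y‖₊ : ℝ≥0∞) = ENNReal.ofReal ‖y‖ := (ofReal_norm y).symm
        _ = ENNReal.ofReal ((‖y‖ - (ε : ℝ)) + (ε : ℝ)) := by congr 1; ring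
        _ ≤ ENNReal.ofReal (‖y‖ - (ε : ℝ)) + ENNReal.ofReal (ε : ℝ) :=
            ENNReal.ofReal_add_le
        _ ≤ G (ι y) + (ε : ℝ≥0∞) := by
            gcongr
            · calc ENNReal.ofReal (‖y‖ - (ε : ℝ))
                  ≤ ENNReal.ofReal ⟪ι y, w'⟫ := ENNReal.ofReal_le_ofReal hval
                _ ≤ G (ι y) := by
                    rw [hG]
                    exact le_iSup (fun w : {w : E₀ // ‖A w‖ ≤ 1} =>
                      ENNReal.ofReal ⟪ι y, (w : E₀)⟫) ⟨w', hAw'⟩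
            · exact le_of_eq ENNReal.ofReal_coe_nnreal
    exact le_antisymm hle hge
  -- G x = ∞ off the range
  have hGtop : ∀ x : E₀, x ∉ Set.range ι → G x = ∞ := by
    intro x hx
    by_contra hfin
    set M : ℝ := (G x).toReal with hM
    have hM0 : 0 ≤ M := ENNReal.toReal_nonneg
    have hMb : ∀ w : E₀, ‖A w‖ ≤ 1 → ⟪x, w⟫ ≤ M := by
      intro w hw
      rcases le_or_gt ⟪x, w⟫ 0 with h | h
      · linarith
      · have h1 : ENNReal.ofReal ⟪x, w⟫ ≤ G x := by
          rw [hG]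
          exact le_iSup (fun w : {w : E₀ // ‖A w‖ ≤ 1} =>
            ENNReal.ofReal ⟪x, (w : E₀)⟫) ⟨w, hw⟩
        have h2 := ENNReal.toReal_mono hfin h1
        rwa [ENNReal.toReal_ofReal h.le] at h2
    have hbound : ∀ w : E₀, |⟪x, w⟫| ≤ M * ‖A w‖ := by
      intro w
      rcases eq_or_ne w 0 with rfl | hw0
      · simp
      have hAw : A w ≠ 0 := fun h => hw0 (hAinj w h)
      have hAn : (0:ℝ) < ‖A w‖ := norm_pos_iff.mpr hAw
      have h1 : (‖A w‖)⁻¹ * ⟪x, w⟫ ≤ M := by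
        have := hMb ((‖A w‖)⁻¹ • w) (by
          rw [map_smul, norm_smul, norm_inv, norm_norm,
            inv_mul_cancel₀ (ne_of_gt hAn)])
        rwa [real_inner_smul_right] at this
      have h2 : -((‖A w‖)⁻¹ * ⟪x, w⟫) ≤ M := by
        have := hMb ((‖A w‖)⁻¹ • (-w)) (by
          rw [map_smul, map_neg, norm_smul, norm_neg, norm_inv, norm_norm,
            inv_mul_cancel₀ (ne_of_gt hAn)])
        rw [real_inner_smul_right, inner_neg_right] at this
        linarith
      have hst : ‖A w‖ * (‖A w‖⁻¹ * ⟪x, w⟫) = ⟪x, w⟫ :=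
        mul_inv_cancel_left₀ (ne_of_gt hAn) _
      have e1 : ⟪x, w⟫ ≤ ‖A w‖ * M := by
        have h3 := mul_le_mul_of_nonneg_left h1 hAn.le
        rwa [hst] at h3
      have e2 : -⟪x, w⟫ ≤ ‖A w‖ * M := by
        have h3 := mul_le_mul_of_nonneg_left h2 hAn.le
        rw [mul_neg, hst] at h3
        linarith
      rw [abs_le]
      constructor
      · linarith [mul_comm M ‖A w‖, e2]
      · linarith [mul_comm M ‖A w‖, e1]
    -- build the functional on the range of A
    have hAlinj : Function.Injective Alin := by
      intro a b hab
      have h0 : A (a - b) = 0 := by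
        rw [map_sub]
        have : Alin a = Alin b := hab
        rw [show A a = Alin a from rfl, show A b = Alin b from rfl, this, sub_self]
      have := hAinj _ h0
      rwa [sub_eq_zero] at this
    set e : E₀ ≃ₗ[ℝ] p := LinearEquiv.ofInjective Alin hAlinj with he
    have hecoe : ∀ w : E₀, ((e w : p) : E₁) = A w := fun w =>
      LinearEquiv.ofInjective_apply Alin (h := hAlinj) w
    have hesymm : ∀ z : p, A (e.symm z) = (z : E₁) := by
      intro z
      have : ((e (e.symm z) : p) : E₁) = (z : E₁) := by rw [e.apply_symm_apply]
      rw [← hecoe (e.symm z)]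
      exact this
    set f₀ : p →ₗ[ℝ] ℝ :=
      ((innerSL ℝ x : E₀ →L[ℝ] ℝ) : E₀ →ₗ[ℝ] ℝ).comp e.symm.toLinearMap with hf₀
    have hf₀app : ∀ z : p, f₀ z = ⟪x, e.symm z⟫ := fun z => rfl
    have hf₀b : ∀ z : p, ‖f₀ z‖ ≤ M * ‖z‖ := by
      intro z
      rw [hf₀app, Real.norm_eq_abs]
      calc |⟪x, e.symm z⟫| ≤ M * ‖A (e.symm z)‖ := hbound _
        _ = M * ‖z‖ := by rw [hesymm z]; rfl
    set f₀c : p →L[ℝ] ℝ := LinearMap.mkContinuous f₀ M hf₀b with hf₀c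
    set g : E₁ →L[ℝ] ℝ := f₀c.extend p.subtypeL with hg2
    have hgeq : ∀ z : p, g (z : E₁) = f₀c z := by
      intro z
      have := ContinuousLinearMap.extend_eq f₀c (e := p.subtypeL) hAdense.denseRange_val
        isUniformEmbedding_subtype_val.isUniformInducing z
      rw [hg2]
      exact this
    set y : E₁ := (InnerProductSpace.toDual ℝ E₁).symm g with hy
    have hyinner : ∀ v : E₁, ⟪y, v⟫ = g v := fun v =>
      InnerProductSpace.toDual_symm_apply
    have hfinal : ι y = x := by
      apply ext_inner_right ℝ
      intro w
      rw [hadj', hyinner]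
      have h1 : A w = ((e w : p) : E₁) := (hecoe w).symm
      rw [h1, hgeq, hf₀c]
      show f₀ (e w) = ⟪x, w⟫
      rw [hf₀app, e.symm_apply_apply]
    exact hx ⟨y, hfinal⟩
  -- conclude
  have hNG : N = G := by
    funext x
    by_cases hx : x ∈ Set.range ι
    · obtain ⟨y, rfl⟩ := hx
      rw [hN₁, hGrange]
    · rw [hN₂ x hx, hGtop x hx]
  refine ⟨hNG ▸ hGlsc, hNG ▸ hGlsc.measurable⟩
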